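/- Let G be a matching covered graph, ∂(Z) a non-trivial tight cut in G, M a perfect matching of G, and (T, δ) an M-PM-decomposition of G of width k. Let G_Z be the matching covered graph obtained from G by contracting Z into a single vertex v_Z. Then there is a (M restricted to G_Z)-PM-decomposition of G_Z of width at most k. -/

import Mathlib

open SimpleGraph

/-- A graph is matching covered if it is connected and every edge lies in a
perfect matching. -/
def MatchingCovered {V : Type*} (G : SimpleGraph V) : Prop :=
  G.Connected ∧ ∀ e ∈ G.edgeSet, ∃ M : G.Subgraph, M.IsPerfectMatching ∧ e ∈ M.edgeSet

/-- The edge cut `∂(X)`: all edges of `G` with exactly one endpoint in `X`. -/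
def cutEdges {V : Type*} (G : SimpleGraph V) (X : Set V) : Set (Sym2 V) :=
  {e | e ∈ G.edgeSet ∧ ∃ u v, e = s(u, v) ∧ u ∈ X ∧ v ∉ X}

/-- The matching porosity of the cut `∂(X)`: the maximum number of edges of a
perfect matching of `G` crossing the cut. -/
noncomputable def matchingPorosity {V : Type*} (G : SimpleGraph V) (X : Set V) : ℕ :=
  sSup {n | ∃ M : G.Subgraph, M.IsPerfectMatching ∧ n = (M.edgeSet ∩ cutEdges G X).ncard}

/-- A cut is tight if every perfect matching contains exactly one of its edges. -/
def IsTightCut {V : Type*} (G : SimpleGraph V) (X : Set V) : Prop :=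
  ∀ M : G.Subgraph, M.IsPerfectMatching → (M.edgeSet ∩ cutEdges G X).ncard = 1

/-- A tight cut is non-trivial if both shores have at least two vertices. -/
def IsNontrivialTightCut {V : Type*} (G : SimpleGraph V) (X : Set V) : Prop :=
  IsTightCut G X ∧ 2 ≤ X.ncard ∧ 2 ≤ Xᶜ.ncard

/-- `A`, `B` form a bipartition of `G` into its two colour classes. -/
def IsBipartitionOf {V : Type*} (G : SimpleGraph V) (A B : Set V) : Prop :=
  A ∪ B = Set.univ ∧ Disjoint A B ∧
    ∀ ⦃u v⦄, G.Adj u v → (u ∈ A ∧ v ∈ B) ∨ (u ∈ B ∧ v ∈ A)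

/-- A brace with colour classes `A` and `B`: a bipartite matching covered graph
without non-trivial tight cuts. -/
def IsBraceWith {V : Type*} (G : SimpleGraph V) (A B : Set V) : Prop :=
  MatchingCovered G ∧ IsBipartitionOf G A B ∧ ∀ X : Set V, ¬ IsNontrivialTightCut G X

/-- The degree of a vertex, as the cardinality of its neighbour set. -/
noncomputable def ndeg {W : Type*} (T : SimpleGraph W) (v : W) : ℕ :=
  (T.neighborSet v).ncard

/-- A cubic tree: a tree all of whose vertices have degree 1 or 3. -/
def IsCubicTree {W : Type*} (T : SimpleGraph W) : Prop :=
  T.IsTree ∧ ∀ v, ndeg T v = 1 ∨ ndeg T v = 3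

/-- The shore of the cut induced by the tree edge `t₁t₂`: all vertices of the
graph mapped by `δ` to leaves of the component of `T - t₁t₂` containing `t₁`. -/
def treeShore {U W : Type*} (T : SimpleGraph W) (δ : U → W) (t₁ t₂ : W) : Set U :=
  {v | (T.deleteEdges {s(t₁, t₂)}).Reachable (δ v) t₁}

/-- The set of leaves of `T` contained in the component of `T - t₁t₂`
containing `t₁`. -/
def sideLeaves {W : Type*} (T : SimpleGraph W) (t₁ t₂ : W) : Set W :=
  {t | ndeg T t = 1 ∧ (T.deleteEdges {s(t₁, t₂)}).Reachable t t₁}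

/-- An odd edge of a cubic tree: an edge of the spine (neither endpoint is a
leaf) such that each of the two components of `T - e` contains an odd number of
leaves of `T`. -/
def IsOddEdge {W : Type*} (T : SimpleGraph W) (t₁ t₂ : W) : Prop :=
  T.Adj t₁ t₂ ∧ ndeg T t₁ ≠ 1 ∧ ndeg T t₂ ≠ 1 ∧
    Odd (sideLeaves T t₁ t₂).ncard ∧ Odd (sideLeaves T t₂ t₁).ncard

/-- The degree of a vertex within the spine of `T` (the tree `T` minus its
leaves): the number of its non-leaf neighbours. -/
noncomputable def spineDeg {W : Type*} (T : SimpleGraph W) (t : W) : ℕ :=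
  {t' | T.Adj t t' ∧ ndeg T t' ≠ 1}.ncard

/-- `(T, δ)` is a perfect matching decomposition of `G`: `T` is a cubic tree
and `δ` is a bijection between the leaves of `T` and the vertices of `G`. -/
def IsPMDecomp {V : Type*} (G : SimpleGraph V) {n : ℕ} (T : SimpleGraph (Fin n))
    (δ : V → Fin n) : Prop :=
  IsCubicTree T ∧ Function.Injective δ ∧ (∀ v, ndeg T (δ v) = 1) ∧
    ∀ t, ndeg T t = 1 → ∃ v, δ v = t

/-- The width of a PM-decomposition: the maximum matching porosity of a cut
induced by an edge of the tree. -/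
noncomputable def decompWidth {V : Type*} (G : SimpleGraph V) {n : ℕ}
    (T : SimpleGraph (Fin n)) (δ : V → Fin n) : ℕ :=
  sSup {k | ∃ t₁ t₂, T.Adj t₁ t₂ ∧ k = matchingPorosity G (treeShore T δ t₁ t₂)}

/-- The perfect matching width of `G`: the minimum width of a perfect matching
decomposition of `G`. -/
noncomputable def pmw {V : Type*} (G : SimpleGraph V) : ℕ :=
  sInf {k | ∃ (n : ℕ) (T : SimpleGraph (Fin n)) (δ : V → Fin n),
    IsPMDecomp G T δ ∧ decompWidth G T δ = k}

/-- A set `S` is `M`-conformal for a perfect matching `M`: no edge of `M`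
crosses between `S` and its complement, i.e. `M` restricted to `S` is a perfect
matching of `G[S]` and `M` restricted to the complement is a perfect matching
of `G - S`. -/
def MConformal {V : Type*} (G : SimpleGraph V) (M : G.Subgraph) (S : Set V) : Prop :=
  ∀ ⦃u v⦄, M.Adj u v → (u ∈ S ↔ v ∈ S)

/-- An `M`-PM-decomposition: a PM-decomposition in which, for every inner edge
of the tree, both shores of the induced cut are `M`-conformal. -/
def IsMPMDecomp {V : Type*} (G : SimpleGraph V) (M : G.Subgraph) {n : ℕ}
    (T : SimpleGraph (Fin n)) (δ : V → Fin n) : Prop :=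
  IsPMDecomp G T δ ∧ ∀ t₁ t₂, T.Adj t₁ t₂ → ndeg T t₁ ≠ 1 → ndeg T t₂ ≠ 1 →
    MConformal G M (treeShore T δ t₁ t₂) ∧ MConformal G M (treeShore T δ t₂ t₁)

/-- The `M`-perfect matching width of `G`: the minimum width of an
`M`-PM-decomposition of `G`. -/
noncomputable def Mpmw {V : Type*} (G : SimpleGraph V) (M : G.Subgraph) : ℕ :=
  sInf {k | ∃ (n : ℕ) (T : SimpleGraph (Fin n)) (δ : V → Fin n),
    IsMPMDecomp G M T δ ∧ decompWidth G T δ = k}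

instance optionFinite {α : Type*} [Finite α] : Finite (Option α) := by
  have := Fintype.ofFinite α
  infer_instance

/-- The tight cut contraction: identify the shore `Z` into a single contraction
vertex (represented by `none`) and delete parallel edges and loops. -/
def contractShore {V : Type*} (G : SimpleGraph V) (Z : Set V) :
    SimpleGraph (Option {v : V // v ∉ Z}) :=
  SimpleGraph.fromRel fun a b =>
    match a, b with
    | some u, some w => G.Adj u w
    | some u, none => ∃ z ∈ Z, G.Adj u z
    | _, _ => False

/-- The relation underlying the restriction of a matching `M` to the tight cut
contraction of the shore `Z`. -/
def matchRel {V : Type*} (G : SimpleGraph V) (M : G.Subgraph) (Z : Set V) :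
    Option {v : V // v ∉ Z} → Option {v : V // v ∉ Z} → Prop
  | some u, some w => M.Adj u w
  | some u, none => ∃ z ∈ Z, M.Adj u z
  | _, _ => False

/-- The restriction of a perfect matching `M` of `G` to the tight cut
contraction `G_Z`: the edges of `M` with both endpoints outside `Z`, together
with the edge joining the contraction vertex to the endpoint outside `Z` of the
unique edge of `M` crossing the cut `∂(Z)`. -/
def restrictMatching {V : Type*} (G : SimpleGraph V) (Z : Set V) (M : G.Subgraph) :
    (contractShore G Z).Subgraph where
  verts := Set.univ
  Adj a b := (contractShore G Z).Adj a b ∧ (matchRel G M Z a b ∨ matchRel G M Z b a)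
  adj_sub h := h.1
  edge_vert _ := Set.mem_univ _
  symm := ⟨fun _ _ h => ⟨h.1.symm, h.2.symm⟩⟩

section Util
variable {W : Type*} {A T : SimpleGraph W}

lemma reach_of_isolated {t w : W} (h : ∀ c, ¬ A.Adj t c) (r : A.Reachable w t) : w = t := by
  obtain ⟨p⟩ := r.symm
  cases p with
  | nil => rfl
  | cons h' _ => exact absurd h' (h _)

lemma reach_side_aux {t₁ t₂ : W} {a c : W} (p : A.Walk a c) :
    (A.deleteEdges {s(t₁, t₂)}).Reachable a c ∨ (A.deleteEdges {s(t₁, t₂)}).Reachable a t₁ ∨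
      (A.deleteEdges {s(t₁, t₂)}).Reachable a t₂ := by
  induction p with
  | nil => exact Or.inl (Reachable.refl _)
  | @cons a b _ hab q ih =>
    by_cases he : s(a, b) = s(t₁, t₂)
    · rw [Sym2.eq_iff] at he
      rcases he with ⟨rfl, rfl⟩ | ⟨rfl, rfl⟩
      · exact Or.inr (Or.inl (Reachable.refl _))
      · exact Or.inr (Or.inr (Reachable.refl _))
    · have hadj : (A.deleteEdges {s(t₁, t₂)}).Adj a b := by
        rw [deleteEdges_adj]; exact ⟨hab, by simpa using he⟩
      rcases ih with h | h | h
      · exact Or.inl (hadj.reachable.trans h)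
      · exact Or.inr (Or.inl (hadj.reachable.trans h))
      · exact Or.inr (Or.inr (hadj.reachable.trans h))

lemma reach_side {t₁ t₂ : W} {a : W} (p : A.Walk a t₁) :
    (A.deleteEdges {s(t₁, t₂)}).Reachable a t₁ ∨ (A.deleteEdges {s(t₁, t₂)}).Reachable a t₂ := by
  rcases reach_side_aux (t₂ := t₂) p with h | h | h
  exacts [Or.inl h, Or.inl h, Or.inr h]

lemma ndeg_one_unique {ℓ b c : W} (h : ndeg T ℓ = 1) (hb : T.Adj ℓ b) (hc : T.Adj ℓ c) :
    c = b := by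
  rw [ndeg, Set.ncard_eq_one] at h
  obtain ⟨a, ha⟩ := h
  have h1 : b ∈ T.neighborSet ℓ := hb
  have h2 : c ∈ T.neighborSet ℓ := hc
  rw [ha] at h1 h2
  simp only [Set.mem_singleton_iff] at h1 h2
  rw [h1, h2]

lemma cutEdges_compl {V : Type*} (G : SimpleGraph V) (X : Set V) :
    cutEdges G Xᶜ = cutEdges G X := by
  ext e
  constructor <;> rintro ⟨he, u, v, rfl, hu, hv⟩
  · exact ⟨he, v, u, Sym2.eq_swap, by simpa using hv, by simpa using hu⟩
  · exact ⟨he, v, u, Sym2.eq_swap, by simpa using hv, by simpa using hu⟩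

end Util

section Counting
variable {V : Type*} {H : SimpleGraph V}

/-- Vertices of `X` whose matching partner lies outside `X`. -/
def bdry (P : H.Subgraph) (X : Set V) : Set V :=
  {x | x ∈ X ∧ ∃ c, P.Adj x c ∧ c ∉ X}

open Classical in
noncomputable def pfn (P : H.Subgraph) (x : V) : V :=
  if h : ∃ c, P.Adj x c then h.choose else x

lemma pfn_adj {P : H.Subgraph} {x c : V} (h : P.Adj x c) : P.Adj x (pfn P x) := by
  have he : ∃ c, P.Adj x c := ⟨c, h⟩
  simp only [pfn, dif_pos he]
  exact he.choose_spec

lemma pfn_eq {P : H.Subgraph} (hP : P.IsMatching) {x c : V} (h : P.Adj x c) :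
    pfn P x = c := by
  obtain ⟨w, _, hw⟩ := hP (P.edge_vert h)
  rw [hw _ (pfn_adj h), hw _ h]

lemma cr_eq_bdry {P : H.Subgraph} (hP : P.IsMatching) (X : Set V) :
    (P.edgeSet ∩ cutEdges H X).ncard = (bdry P X).ncard := by
  have himg : (fun x => s(x, pfn P x)) '' bdry P X = P.edgeSet ∩ cutEdges H X := by
    ext e
    constructor
    · rintro ⟨x, ⟨hxX, c, hadj, hc⟩, rfl⟩
      have hpx := pfn_eq hP hadj
      refine ⟨by simpa [Subgraph.mem_edgeSet] using pfn_adj hadj,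
        (pfn_adj hadj).adj_sub, x, pfn P x, rfl, hxX, by rwa [hpx]⟩
    · rintro ⟨heP, _, u, v, rfl, hu, hv⟩
      rw [Subgraph.mem_edgeSet] at heP
      exact ⟨u, ⟨hu, v, heP, hv⟩, by show s(u, pfn P u) = s(u, v); rw [pfn_eq hP heP]⟩
  have hinj : Set.InjOn (fun x => s(x, pfn P x)) (bdry P X) := by
    rintro x ⟨hxX, cx, hax, hcx⟩ y ⟨hyX, cy, hay, hcy⟩ hxy
    simp only [Sym2.eq_iff] at hxy
    rcases hxy with ⟨h1, _⟩ | ⟨h1, h2⟩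
    · exact h1
    · rw [pfn_eq hP hay] at h1
      exact absurd (h1 ▸ hxX) hcy
  rw [← himg, Set.ncard_image_of_injOn hinj]

lemma even_ncard_of_involution {α : Type*} [Finite α] :
    ∀ (n : ℕ) (s : Set α), s.ncard = n → ∀ (f : α → α),
      (∀ x ∈ s, f x ∈ s) → (∀ x ∈ s, f (f x) = x) → (∀ x ∈ s, f x ≠ x) → Even s.ncard := by
  intro n
  induction n using Nat.strong_induction_on with
  | _ n ih =>
    intro s hs f hmem hinv hne
    rcases s.eq_empty_or_nonempty with rfl | ⟨x, hx⟩
    · simp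
    have h1 : f x ∈ s := hmem x hx
    have hxfx : x ≠ f x := fun h => hne x hx h.symm
    have hsub : {x, f x} ⊆ s := by
      rintro y (rfl | rfl); exacts [hx, h1]
    have hpair : ({x, f x} : Set α).ncard = 2 := Set.ncard_pair hxfx
    have hcard : (s \ {x, f x}).ncard = s.ncard - 2 := by
      rw [Set.ncard_diff hsub, hpair]
    have hge : 2 ≤ s.ncard := by
      have := Set.ncard_le_ncard hsub s.toFinite
      omega
    have heven : Even (s \ {x, f x}).ncard := by
      refine ih (s.ncard - 2) (by omega) _ hcard f ?_ ?_ ?_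
      · rintro y ⟨hy, hy2⟩
        simp only [Set.mem_insert_iff, Set.mem_singleton_iff, not_or] at hy2
        refine ⟨hmem y hy, ?_⟩
        simp only [Set.mem_insert_iff, Set.mem_singleton_iff, not_or]
        constructor
        · intro h; exact hy2.2 (by rw [← hinv y hy, h])
        · intro h
          have : f (f y) = f (f x) := by rw [h]
          rw [hinv y hy, hinv x hx] at this
          exact hy2.1 this
      · exact fun y hy => hinv y hy.1
      · exact fun y hy => hne y hy.1
    obtain ⟨k, hk⟩ := heven
    exact ⟨k + 1, by omega⟩

lemma even_ncard_add_cr [Finite V] {P : H.Subgraph} (hP : P.IsPerfectMatching) (X : Set V) :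
    Even (X.ncard + (P.edgeSet ∩ cutEdges H X).ncard) := by
  classical
  rw [cr_eq_bdry hP.1]
  set inX : Set V := {x | x ∈ X ∧ ∃ c, P.Adj x c ∧ c ∈ X} with hinX
  have hsplit : X = inX ∪ bdry P X := by
    ext x
    simp only [Set.mem_union, hinX, bdry, Set.mem_setOf_eq]
    constructor
    · intro hx
      obtain ⟨c, hc, _⟩ := hP.1 (hP.2 x)
      by_cases h : c ∈ X
      · exact Or.inl ⟨hx, c, hc, h⟩
      · exact Or.inr ⟨hx, c, hc, h⟩
    · rintro (⟨h, _⟩ | ⟨h, _⟩) <;> exact h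
  have hdisj : Disjoint inX (bdry P X) := by
    rw [Set.disjoint_left]
    rintro x ⟨_, c, hc, hcX⟩ ⟨_, c', hc', hc'X⟩
    obtain ⟨w, _, hw⟩ := hP.1 (hP.2 x)
    rw [hw _ hc'] at hc'X
    rw [hw _ hc] at hcX
    exact hc'X hcX
  have hXcard : X.ncard = inX.ncard + (bdry P X).ncard :=
    (congrArg Set.ncard hsplit).trans (Set.ncard_union_eq hdisj (Set.toFinite _) (Set.toFinite _))
  have heven : Even inX.ncard := by
    refine even_ncard_of_involution _ inX rfl (pfn P) ?_ ?_ ?_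
    · rintro x ⟨hxX, c, hc, hcX⟩
      have h1 := pfn_eq hP.1 hc
      exact ⟨h1 ▸ hcX, x, (h1 ▸ hc).symm, hxX⟩
    · rintro x ⟨hxX, c, hc, hcX⟩
      rw [pfn_eq hP.1 hc]
      exact pfn_eq hP.1 (hc.symm)
    · rintro x ⟨hxX, c, hc, hcX⟩ h
      have := pfn_adj hc
      rw [h] at this
      exact H.loopless.irrefl x this.adj_sub
  obtain ⟨k, hk⟩ := heven
  rw [hXcard, hk]
  exact ⟨k + (bdry P X).ncard, by omega⟩

end Counting
section Contraction

variable {V : Type*} [Finite V] {G : SimpleGraph V} {Z : Set V}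

lemma crossing_unique (hZt : IsTightCut G Z) {P : G.Subgraph} (hP : P.IsPerfectMatching)
    {u z u' z' : V} (hu : u ∉ Z) (hz : z ∈ Z) (ha : P.Adj u z)
    (hu' : u' ∉ Z) (hz' : z' ∈ Z) (ha' : P.Adj u' z') : u = u' ∧ z = z' := by
  have h1 := hZt P hP
  rw [Set.ncard_eq_one] at h1
  obtain ⟨e, he⟩ := h1
  have m1 : s(u, z) ∈ P.edgeSet ∩ cutEdges G Z :=
    ⟨Subgraph.mem_edgeSet.2 ha, (G.mem_edgeSet).2 ha.adj_sub, z, u, Sym2.eq_swap, hz, hu⟩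
  have m2 : s(u', z') ∈ P.edgeSet ∩ cutEdges G Z :=
    ⟨Subgraph.mem_edgeSet.2 ha', (G.mem_edgeSet).2 ha'.adj_sub, z', u', Sym2.eq_swap, hz', hu'⟩
  rw [he] at m1 m2
  simp only [Set.mem_singleton_iff] at m1 m2
  rw [← m2] at m1
  rw [Sym2.eq_iff] at m1
  rcases m1 with ⟨h1, h2⟩ | ⟨h1, h2⟩
  · exact ⟨h1, h2⟩
  · exact absurd (h1 ▸ hu) (fun h => h hz')

lemma exists_crossing (hZt : IsTightCut G Z) {P : G.Subgraph} (hP : P.IsPerfectMatching) :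
    ∃ u z, u ∉ Z ∧ z ∈ Z ∧ P.Adj u z := by
  have h1 := hZt P hP
  rw [Set.ncard_eq_one] at h1
  obtain ⟨e, he⟩ := h1
  have : e ∈ P.edgeSet ∩ cutEdges G Z := he ▸ rfl
  obtain ⟨heP, -, a, b, rfl, ha, hb⟩ := this
  rw [Subgraph.mem_edgeSet] at heP
  exact ⟨b, a, hb, ha, heP.symm⟩

/-- The set of vertices of `G` corresponding to a vertex of `G_Z`, with the
contraction vertex sent to a chosen vertex `z₀` of the shore. -/
def liftV (Z : Set V) (z₀ : V) : Option {v : V // v ∉ Z} → V := fun o => o.elim z₀ Subtype.val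

lemma contractShore_adj {a b : Option {v : V // v ∉ Z}} :
    (contractShore G Z).Adj a b ↔ a ≠ b ∧
      ((∃ (u w : {v : V // v ∉ Z}), a = some u ∧ b = some w ∧ G.Adj u w) ∨
       (∃ u : {v : V // v ∉ Z}, (a = some u ∧ b = none ∨ a = none ∧ b = some u) ∧
          ∃ z ∈ Z, G.Adj u z)) := by
  rw [contractShore, fromRel_adj]
  refine and_congr_right fun hne => ?_
  constructor
  · rintro (h | h)
    · match a, b, h with
      | some u, some w, h => exact Or.inl ⟨u, w, rfl, rfl, h⟩
      | some u, none, h => exact Or.inr ⟨u, Or.inl ⟨rfl, rfl⟩, h⟩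
    · match a, b, h with
      | some u, some w, h => exact Or.inl ⟨u, w, rfl, rfl, h.symm⟩
      | none, some u, h => exact Or.inr ⟨u, Or.inr ⟨rfl, rfl⟩, h⟩
  · rintro (⟨u, w, rfl, rfl, h⟩ | ⟨u, (⟨rfl, rfl⟩ | ⟨rfl, rfl⟩), h⟩)
    · exact Or.inl h
    · exact Or.inl h
    · exact Or.inr h

lemma restrictMatching_adj {M : G.Subgraph} {a b : Option {v : V // v ∉ Z}} :
    (restrictMatching G Z M).Adj a b ↔ (contractShore G Z).Adj a b ∧
      ((∃ (u w : {v : V // v ∉ Z}), a = some u ∧ b = some w ∧ M.Adj u w) ∨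
       (∃ u : {v : V // v ∉ Z}, (a = some u ∧ b = none ∨ a = none ∧ b = some u) ∧
          ∃ z ∈ Z, M.Adj u z)) := by
  refine and_congr_right fun _ => ?_
  show matchRel G M Z a b ∨ matchRel G M Z b a ↔ _
  constructor
  · rintro (h | h)
    · match a, b, h with
      | some u, some w, h => exact Or.inl ⟨u, w, rfl, rfl, h⟩
      | some u, none, h => exact Or.inr ⟨u, Or.inl ⟨rfl, rfl⟩, h⟩
    · match a, b, h with
      | some u, some w, h => exact Or.inl ⟨u, w, rfl, rfl, h.symm⟩
      | none, some u, h => exact Or.inr ⟨u, Or.inr ⟨rfl, rfl⟩, h⟩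
  · rintro (⟨u, w, rfl, rfl, h⟩ | ⟨u, (⟨rfl, rfl⟩ | ⟨rfl, rfl⟩), h⟩)
    · exact Or.inl h
    · exact Or.inl h
    · exact Or.inr h

variable {M : G.Subgraph}

lemma restrictMatching_isPM (hZt : IsTightCut G Z) (hM : M.IsPerfectMatching) :
    (restrictMatching G Z M).IsPerfectMatching := by
  constructor
  swap
  · intro v; exact Set.mem_univ _
  intro v' _
  match v' with
  | some u =>
    obtain ⟨w, hw, hwu⟩ := hM.1 (hM.2 u.1)
    by_cases hwZ : w ∈ Z
    · refine ⟨none, restrictMatching_adj.2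
        ⟨contractShore_adj.2 ⟨by simp, Or.inr ⟨u, Or.inl ⟨rfl, rfl⟩, w, hwZ, hw.adj_sub⟩⟩,
         Or.inr ⟨u, Or.inl ⟨rfl, rfl⟩, w, hwZ, hw⟩⟩, ?_⟩
      rintro y hy
      rw [restrictMatching_adj] at hy
      rcases hy.2 with ⟨p, q, hp, hq, hadj⟩ | ⟨p, (⟨hp, hq⟩ | ⟨hp, hq⟩), z, hz, hadj⟩
      · rw [Option.some_inj] at hp
        rw [← hp] at hadj
        exact absurd hwZ ((hwu _ hadj) ▸ q.2)
      · exact hq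
      · exact absurd hp (by simp)
    · refine ⟨some ⟨w, hwZ⟩, restrictMatching_adj.2
        ⟨contractShore_adj.2 ⟨by simpa using fun h => hw.adj_sub.ne (congrArg Subtype.val h),
          Or.inl ⟨u, ⟨w, hwZ⟩, rfl, rfl, hw.adj_sub⟩⟩,
         Or.inl ⟨u, ⟨w, hwZ⟩, rfl, rfl, hw⟩⟩, ?_⟩
      rintro y hy
      rw [restrictMatching_adj] at hy
      rcases hy.2 with ⟨p, q, hp, hq, hadj⟩ | ⟨p, (⟨hp, hq⟩ | ⟨hp, hq⟩), z, hz, hadj⟩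
      · rw [Option.some_inj] at hp
        rw [← hp] at hadj
        rw [hq]
        exact congrArg some (Subtype.ext (hwu _ hadj))
      · rw [Option.some_inj] at hp
        rw [← hp] at hadj
        exact absurd ((hwu _ hadj) ▸ hz) hwZ
      · exact absurd hp (by simp)
  | none =>
    obtain ⟨u₀, z₀, hu₀, hz₀, hM₀⟩ := exists_crossing hZt hM
    refine ⟨some ⟨u₀, hu₀⟩, restrictMatching_adj.2
      ⟨contractShore_adj.2 ⟨by simp, Or.inr ⟨⟨u₀, hu₀⟩, Or.inr ⟨rfl, rfl⟩, z₀, hz₀,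
        hM₀.adj_sub⟩⟩, Or.inr ⟨⟨u₀, hu₀⟩, Or.inr ⟨rfl, rfl⟩, z₀, hz₀, hM₀⟩⟩, ?_⟩
    rintro y hy
    rw [restrictMatching_adj] at hy
    rcases hy.2 with ⟨p, q, hp, hq, hadj⟩ | ⟨p, (⟨hp, hq⟩ | ⟨hp, hq⟩), z, hz, hadj⟩
    · exact absurd hp (by simp)
    · exact absurd hp (by simp)
    · rw [hq]
      exact congrArg some (Subtype.ext (crossing_unique hZt hM p.2 hz hadj hu₀ hz₀ hM₀).1)
end Contraction
section Porosity

lemma even_cancel {a b : ℕ} (h : Even (a + b)) (ha : Even a) : Even b := by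
  rcases h with ⟨i, hi⟩; rcases ha with ⟨j, hj⟩; exact ⟨i - j, by omega⟩

lemma conformal_cr_zero {V' : Type*} {H : SimpleGraph V'} {Q : H.Subgraph} {X : Set V'}
    (h : MConformal H Q X) : Q.edgeSet ∩ cutEdges H X = ∅ := by
  ext e
  simp only [Set.mem_empty_iff_false, iff_false]
  rintro ⟨heQ, -, a, b, rfl, ha, hb⟩
  exact hb ((h (Subgraph.mem_edgeSet.1 heQ)).1 ha)

lemma cr_le_bound {V' : Type*} [Finite V'] {H : SimpleGraph V'} (P : H.Subgraph) (X : Set V') :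
    (P.edgeSet ∩ cutEdges H X).ncard ≤ Nat.card (Sym2 V') := by
  rw [← Set.ncard_univ]
  exact Set.ncard_le_ncard (Set.subset_univ _) (Set.toFinite _)

lemma mp_bddAbove {V' : Type*} [Finite V'] {H : SimpleGraph V'} (X : Set V') :
    BddAbove {n | ∃ P : H.Subgraph, P.IsPerfectMatching ∧ n = (P.edgeSet ∩ cutEdges H X).ncard} :=
  ⟨Nat.card (Sym2 V'), by rintro n ⟨P, hP, rfl⟩; exact cr_le_bound P X⟩

lemma mp_le_bound {V' : Type*} [Finite V'] (H : SimpleGraph V') (X : Set V') :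
    matchingPorosity H X ≤ Nat.card (Sym2 V') :=
  csSup_le' (by rintro n ⟨P, hP, rfl⟩; exact cr_le_bound P X)

variable {V : Type*} [Finite V] {G : SimpleGraph V} {Z : Set V} {M : G.Subgraph}

lemma conformal_restrict (hZt : IsTightCut G Z) (hM : M.IsPerfectMatching)
    {u₀ z₀ : V} (hu₀ : u₀ ∉ Z) (hz₀ : z₀ ∈ Z) (hM₀ : M.Adj u₀ z₀)
    {Y : Set V} (hY : MConformal G M Y) :
    MConformal (contractShore G Z) (restrictMatching G Z M) (liftV Z z₀ ⁻¹' Y) := by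
  intro a b hab
  rw [restrictMatching_adj] at hab
  rcases hab.2 with ⟨p, q, rfl, rfl, hadj⟩ | ⟨p, (⟨rfl, rfl⟩ | ⟨rfl, rfl⟩), z, hz, hadj⟩
  · exact hY hadj
  · obtain ⟨h1, h2⟩ := crossing_unique hZt hM p.2 hz hadj hu₀ hz₀ hM₀
    show p.1 ∈ Y ↔ z₀ ∈ Y
    rw [h1]
    exact hY hM₀
  · obtain ⟨h1, h2⟩ := crossing_unique hZt hM p.2 hz hadj hu₀ hz₀ hM₀
    show z₀ ∈ Y ↔ p.1 ∈ Y
    rw [h1]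
    exact (hY hM₀).symm

lemma cr_le_porosity (hGmc : MatchingCovered G) (hZt : IsTightCut G Z)
    (hM : M.IsPerfectMatching)
    {u₀ z₀ : V} (hu₀ : u₀ ∉ Z) (hz₀ : z₀ ∈ Z) (hM₀ : M.Adj u₀ z₀)
    {Y : Set V} (hY : MConformal G M Y)
    {N : (contractShore G Z).Subgraph} (hN : N.IsPerfectMatching) :
    (N.edgeSet ∩ cutEdges (contractShore G Z) (liftV Z z₀ ⁻¹' Y)).ncard
      ≤ matchingPorosity G Y := by
  classical
  set X' : Set (Option {v : V // v ∉ Z}) := liftV Z z₀ ⁻¹' Y with hX'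
  -- the partner of the contraction vertex
  obtain ⟨w', hw', hw'u⟩ := hN.1 (hN.2 none)
  match w', hw', hw'u with
  | none, hw', _ => exact absurd rfl hw'.adj_sub.ne
  | some u, hw', hw'u =>
  have hz₁ : ∃ z ∈ Z, G.Adj u.1 z := by
    have h := contractShore_adj.1 hw'.adj_sub
    rcases h.2 with ⟨p, q, hp, hq, hadj⟩ | ⟨p, (⟨hp, hq⟩ | ⟨hp, hq⟩), z, hz, hadj⟩
    · exact absurd hp (by simp)
    · exact absurd hp (by simp)
    · rw [Option.some_inj] at hq
      exact ⟨z, hz, hq ▸ hadj⟩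
  obtain ⟨z₁, hz₁Z, hGz₁⟩ := hz₁
  obtain ⟨M₁, hM₁, he₁⟩ := hGmc.2 s(u.1, z₁) ((G.mem_edgeSet).2 hGz₁)
  have hM₁a : M₁.Adj u.1 z₁ := Subgraph.mem_edgeSet.1 he₁
  -- the lifted perfect matching
  set Mh : G.Subgraph :=
    { verts := Set.univ
      Adj := fun a b => (∃ (ha : a ∉ Z) (hb : b ∉ Z), N.Adj (some ⟨a, ha⟩) (some ⟨b, hb⟩)) ∨
        ((a ∈ Z ∨ b ∈ Z) ∧ M₁.Adj a b)
      adj_sub := by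
        rintro a b (⟨ha, hb, h⟩ | ⟨-, h⟩)
        · have h2 := contractShore_adj.1 h.adj_sub
          rcases h2.2 with ⟨p, q, hp, hq, hadj⟩ | ⟨p, (⟨hp, hq⟩ | ⟨hp, hq⟩), z, hz, hadj⟩
          · rw [Option.some_inj] at hp hq
            rw [← hp, ← hq] at hadj
            exact hadj
          · exact absurd hq (by simp)
          · exact absurd hp (by simp)
        · exact h.adj_sub
      edge_vert := fun _ => Set.mem_univ _
      symm := by
        constructor
        rintro a b (⟨ha, hb, h⟩ | ⟨hab, h⟩)
        · exact Or.inl ⟨hb, ha, h.symm⟩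
        · exact Or.inr ⟨hab.symm, h.symm⟩ } with hMhdef
  have hMh : Mh.IsPerfectMatching := by
    constructor
    swap
    · intro v; exact Set.mem_univ _
    intro v _
    by_cases hvZ : v ∈ Z
    · obtain ⟨c, hc, hcu⟩ := hM₁.1 (hM₁.2 v)
      refine ⟨c, Or.inr ⟨Or.inl hvZ, hc⟩, ?_⟩
      rintro y (⟨hy1, hy2, hy3⟩ | ⟨-, hy⟩)
      · exact absurd hvZ hy1
      · exact hcu y hy
    · by_cases hvu : v = u.1
      · subst hvu
        refine ⟨z₁, Or.inr ⟨Or.inr hz₁Z, hM₁a⟩, ?_⟩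
        rintro y (⟨ha, hb, h⟩ | ⟨-, h⟩)
        · obtain ⟨pu, hpu, hpuu⟩ := hN.1 (hN.2 (some u))
          have e1 : (none : Option {v : V // v ∉ Z}) = pu := hpuu none hw'.symm
          have e2 : (⟨u.1, ha⟩ : {v : V // v ∉ Z}) = u := Subtype.ext rfl
          have : some (⟨y, hb⟩ : {v : V // v ∉ Z}) = pu := hpuu _ (by rw [← e2]; exact h)
          rw [← e1] at this
          exact absurd this (by simp)
        · obtain ⟨c, hc, hcu⟩ := hM₁.1 (hM₁.2 u.1)
          rw [hcu y h, hcu z₁ hM₁a]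
      · obtain ⟨c', hc', hcu'⟩ := hN.1 (hN.2 (some ⟨v, hvZ⟩))
        match c', hc', hcu' with
        | none, hc', hcu' =>
          have := hw'u _ hc'.symm
          rw [Option.some_inj] at this
          exact absurd (congrArg Subtype.val this) hvu
        | some q, hc', hcu' =>
          refine ⟨q.1, Or.inl ⟨hvZ, q.2, by rwa [Subtype.coe_eta]⟩, ?_⟩
          rintro y (⟨hy1, hy2, hy3⟩ | ⟨hOr, hy⟩)
          · have := hcu' _ hy3
            rw [Option.some_inj] at this
            exact congrArg Subtype.val this
          · rcases hOr with h | h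
            · exact absurd h hvZ
            · exact absurd (crossing_unique hZt hM₁ hvZ h hy u.2 hz₁Z hM₁a).1 hvu
  -- parity facts
  have hEvenY : Even Y.ncard := by
    have h := even_ncard_add_cr hM Y
    rwa [conformal_cr_zero hY, Set.ncard_empty, Nat.add_zero] at h
  have hEvenX' : Even X'.ncard := by
    have h := even_ncard_add_cr (restrictMatching_isPM hZt hM) X'
    rwa [conformal_cr_zero (conformal_restrict hZt hM hu₀ hz₀ hM₀ hY), Set.ncard_empty,
      Nat.add_zero] at h
  have hEvenN : Even (bdry N X').ncard := by
    have h := even_cancel (even_ncard_add_cr hN X') hEvenX'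
    rwa [cr_eq_bdry hN.1] at h
  have hEvenMh : Even (bdry Mh Y).ncard := by
    have h := even_cancel (even_ncard_add_cr hMh Y) hEvenY
    rwa [cr_eq_bdry hMh.1] at h
  set w₀ : Option {v : V // v ∉ Z} := if u.1 ∈ Y then some u else none with hw₀
  have hnone : (none : Option {v : V // v ∉ Z}) ∉ bdry N X' \ {w₀} := by
    rintro ⟨⟨hnX, c, hc, hcX⟩, hne⟩
    have hcu : c = some u := hw'u c hc
    subst hcu
    have huY : u.1 ∉ Y := hcX
    exact hne (by rw [hw₀, if_neg huY]; rfl)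
  have hmaps : ∀ x' ∈ bdry N X' \ {w₀}, liftV Z z₀ x' ∈ bdry Mh Y := by
    intro x' hx'
    match x' with
    | none => exact absurd hx' hnone
    | some v =>
      obtain ⟨⟨hvX, c, hc, hcX⟩, hne⟩ := hx'
      match c, hc, hcX with
      | none, hc, hcX =>
        have hvu : v = u := by
          have h := hw'u _ hc.symm
          rwa [Option.some_inj] at h
        subst hvu
        exact absurd (show (some v : Option {v : V // v ∉ Z}) = w₀ by
          rw [hw₀, if_pos (show (v : V) ∈ Y from hvX)]) hne
      | some q, hc, hcX =>
        exact ⟨hvX, q.1, Or.inl ⟨v.2, q.2, hc⟩, hcX⟩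
  have hinj : Set.InjOn (liftV Z z₀) (bdry N X' \ {w₀}) := by
    rintro a ha b hb hab
    match a, ha, b, hb with
    | none, ha, _, _ => exact absurd ha hnone
    | some v, _, none, hb => exact absurd hb hnone
    | some v, _, some w, _ =>
      exact congrArg some (Subtype.ext hab)
  have hle1 : (bdry N X').ncard ≤ (bdry N X' \ {w₀}).ncard + 1 := by
    by_cases hw : w₀ ∈ bdry N X'
    · rw [Set.ncard_diff_singleton_add_one hw]
    · rw [Set.diff_singleton_eq_self hw]
      omega
  have hle2 : (bdry N X' \ {w₀}).ncard ≤ (bdry Mh Y).ncard :=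
    Set.ncard_le_ncard_of_injOn _ hmaps hinj (Set.toFinite _)
  have hfin : (N.edgeSet ∩ cutEdges (contractShore G Z) X').ncard
      ≤ (Mh.edgeSet ∩ cutEdges G Y).ncard := by
    rw [cr_eq_bdry hN.1, cr_eq_bdry hMh.1]
    obtain ⟨i, hi⟩ := hEvenN
    obtain ⟨j, hj⟩ := hEvenMh
    omega
  exact hfin.trans (le_csSup (mp_bddAbove Y) ⟨Mh, hMh, rfl⟩)

end Porosity
section TreeSurgery

lemma sym2_ne_right {W : Type*} {p q a c : W} (h1 : p ≠ c) (h2 : q ≠ c) :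
    s(p, q) ≠ s(a, c) := by
  intro h
  rw [Sym2.eq_iff] at h
  rcases h with ⟨rfl, rfl⟩ | ⟨rfl, rfl⟩
  · exact h2 rfl
  · exact h1 rfl

lemma sym2_subtype_eq {W : Type*} {P : W → Prop} {a c t₁ t₂ : {t : W // P t}} :
    s(a.1, c.1) = s(t₁.1, t₂.1) ↔ s(a, c) = s(t₁, t₂) := by
  rw [Sym2.eq_iff, Sym2.eq_iff]
  simp only [← Subtype.ext_iff]

variable {W : Type*}

lemma walk_cast_length {A : SimpleGraph W} {u u' w : W} (h : u = u') (p : A.Walk u w) :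
    (h ▸ p : A.Walk u' w).length = p.length := by subst h; rfl

lemma mapdown {W₁ : Type*} {A₁ : SimpleGraph W₁} {B : SimpleGraph W} (g : W₁ → W)
    (h : ∀ a c, A₁.Adj a c → B.Reachable (g a) (g c)) {a c : W₁} (r : A₁.Reachable a c) :
    B.Reachable (g a) (g c) := by
  obtain ⟨p⟩ := r
  induction p with
  | nil => exact Reachable.refl _
  | cons hadj q ih => exact (h _ _ hadj).trans ih

lemma mapup {A : SimpleGraph W} {ℓ b : W} (A₁ : SimpleGraph {t : W // t ≠ ℓ ∧ t ≠ b})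
    (hold : ∀ a c : {t : W // t ≠ ℓ ∧ t ≠ b}, A.Adj a.1 c.1 → A₁.Adj a c)
    (hskip : ∀ a c : {t : W // t ≠ ℓ ∧ t ≠ b}, A.Adj a.1 b → A.Adj b c.1 → a ≠ c →
      A₁.Reachable a c)
    (hl : ∀ a : W, A.Adj ℓ a → a = b) :
    ∀ (n : ℕ) {w₁ w₂ : W} (p : A.Walk w₁ w₂), p.length ≤ n →
      ∀ (h₁ : w₁ ≠ ℓ ∧ w₁ ≠ b) (h₂ : w₂ ≠ ℓ ∧ w₂ ≠ b), A₁.Reachable ⟨w₁, h₁⟩ ⟨w₂, h₂⟩ := by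
  intro n
  induction n with
  | zero =>
    intro w₁ w₂ p hp h₁ h₂
    cases p with
    | nil => exact Reachable.refl _
    | cons h q => simp [SimpleGraph.Walk.length_cons] at hp
  | succ n ih =>
    intro w₁ w₂ p hp h₁ h₂
    cases p with
    | nil => exact Reachable.refl _
    | @cons _ c _ hac q =>
      by_cases hcℓ : c = ℓ
      · subst hcℓ
        exact absurd (hl w₁ hac.symm) h₁.2
      by_cases hcb : c = b
      · replace hac : A.Adj w₁ b := hcb ▸ hac
        simp only [SimpleGraph.Walk.length_cons] at hp
        obtain ⟨q', hq'⟩ : ∃ q' : A.Walk b w₂, q'.length = q.length :=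
          ⟨hcb ▸ q, walk_cast_length hcb q⟩
        cases q' with
        | nil => exact absurd rfl h₂.2
        | @cons _ d _ hbd r =>
          simp only [SimpleGraph.Walk.length_cons] at hq'
          by_cases hdℓ : d = ℓ
          · replace hbd : A.Adj b ℓ := hdℓ ▸ hbd
            obtain ⟨r₂, hr₂⟩ : ∃ r₂ : A.Walk ℓ w₂, r₂.length = r.length :=
              ⟨hdℓ ▸ r, walk_cast_length hdℓ r⟩
            cases r₂ with
            | nil => exact absurd rfl h₂.1
            | @cons _ e _ hle r' =>
              simp only [SimpleGraph.Walk.length_cons] at hr₂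
              have heb : e = b := hl e hle
              obtain ⟨r₃, hr₃⟩ : ∃ r₃ : A.Walk b w₂, r₃.length = r'.length :=
                ⟨heb ▸ r', walk_cast_length heb r'⟩
              refine ih (SimpleGraph.Walk.cons hac r₃) ?_ h₁ h₂
              simp only [SimpleGraph.Walk.length_cons]
              omega
          · have hd : d ≠ ℓ ∧ d ≠ b := ⟨hdℓ, hbd.ne'⟩
            have hr : A₁.Reachable ⟨d, hd⟩ ⟨w₂, h₂⟩ := by
              refine ih r ?_ hd h₂
              omega
            by_cases hwd : w₁ = d
            · subst hwd
              exact hr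
            · exact (hskip ⟨w₁, h₁⟩ ⟨d, hd⟩ hac hbd
                (fun h => hwd (congrArg Subtype.val h))).trans hr
      · have hc : c ≠ ℓ ∧ c ≠ b := ⟨hcℓ, hcb⟩
        refine ((hold ⟨w₁, h₁⟩ ⟨c, hc⟩ hac).reachable).trans (ih q ?_ hc h₂)
        simp only [SimpleGraph.Walk.length_cons] at hp
        omega

end TreeSurgery
section PruneStep

/-- Cut correspondence between two (partial) decompositions. -/
def CutCorr {U W W₂ : Type*} (T : SimpleGraph W) (δ : U → W)
    (T₂ : SimpleGraph W₂) (δ₂ : U → W₂) : Prop :=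
  ∀ t₁ t₂ : W₂, T₂.Adj t₁ t₂ → ∃ s₁ s₂ : W, T.Adj s₁ s₂ ∧
    treeShore T₂ δ₂ t₁ t₂ = treeShore T δ s₁ s₂ ∧
    treeShore T₂ δ₂ t₂ t₁ = treeShore T δ s₂ s₁ ∧
    (ndeg T₂ t₁ ≠ 1 → ndeg T₂ t₂ ≠ 1 → ndeg T s₁ ≠ 1 ∧ ndeg T s₂ ≠ 1)

lemma CutCorr.refl {U W : Type*} (T : SimpleGraph W) (δ : U → W) : CutCorr T δ T δ :=
  fun t₁ t₂ h => ⟨t₁, t₂, h, rfl, rfl, fun h1 h2 => ⟨h1, h2⟩⟩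

lemma CutCorr.comp {U W W₁ W₂ : Type*} {T : SimpleGraph W} {δ : U → W}
    {T₁ : SimpleGraph W₁} {δ₁ : U → W₁} {T₂ : SimpleGraph W₂} {δ₂ : U → W₂}
    (h1 : CutCorr T δ T₁ δ₁) (h2 : CutCorr T₁ δ₁ T₂ δ₂) : CutCorr T δ T₂ δ₂ := by
  intro t₁ t₂ hadj
  obtain ⟨s₁, s₂, hs, e1, e2, hin⟩ := h2 t₁ t₂ hadj
  obtain ⟨r₁, r₂, hr, f1, f2, hin'⟩ := h1 s₁ s₂ hs
  refine ⟨r₁, r₂, hr, e1.trans f1, e2.trans f2, fun n1 n2 => hin' (hin n1 n2).1 (hin n1 n2).2⟩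

lemma prune_step {U W : Type*} [Finite W] (T : SimpleGraph W) (δ : U → W)
    (hT : IsCubicTree T) (hinj : Function.Injective δ) (hleaf : ∀ v, ndeg T (δ v) = 1)
    (hU : ∃ u₁ u₂ : U, u₁ ≠ u₂)
    {ℓ : W} (hℓ : ndeg T ℓ = 1) (hℓim : ∀ v, δ v ≠ ℓ) :
    ∃ (b : W) (T₁ : SimpleGraph {t : W // t ≠ ℓ ∧ t ≠ b}) (δ₁ : U → {t : W // t ≠ ℓ ∧ t ≠ b}),
      ℓ ≠ b ∧ IsCubicTree T₁ ∧ Function.Injective δ₁ ∧ (∀ v, ndeg T₁ (δ₁ v) = 1) ∧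
      CutCorr T δ T₁ δ₁ := by
  obtain ⟨hconn, hacyc⟩ := (isTree_iff T).1 hT.1
  have hbridge : ∀ {p q : W}, T.Adj p q → ¬ (T.deleteEdges {s(p, q)}).Reachable p q := by
    intro p q h
    have h2 := (isAcyclic_iff_forall_edge_isBridge.1 hacyc) ((T.mem_edgeSet).2 h)
    rw [isBridge_iff] at h2
    exact h2
  -- the neighbour of ℓ
  obtain ⟨b, hbset⟩ := Set.ncard_eq_one.1 hℓ
  have hb : T.Adj ℓ b := by
    have : b ∈ T.neighborSet ℓ := by rw [hbset]; rfl
    exact this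
  have hlb : ∀ a, T.Adj ℓ a → a = b := fun a ha => ndeg_one_unique hℓ hb ha
  have hbℓ : ℓ ≠ b := hb.ne
  -- b has degree 3
  have hb3 : ndeg T b = 3 := by
    rcases hT.2 b with h1 | h3
    · exfalso
      have hbl2 : ∀ a, T.Adj b a → a = ℓ := fun a ha => ndeg_one_unique h1 hb.symm ha
      obtain ⟨u₁, u₂, hu12⟩ := hU
      have hcomp : ∀ {a c : W} (_ : T.Walk a c), (c = ℓ ∨ c = b) → (a = ℓ ∨ a = b) := by
        intro a c p
        induction p with
        | nil => exact id
        | @cons a d _ had q ih =>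
          intro hc
          rcases ih hc with rfl | rfl
          · exact Or.inr (hlb a had.symm)
          · exact Or.inl (hbl2 a had.symm)
      have hk : ∀ v : U, δ v = b := by
        intro v
        obtain ⟨p⟩ := hconn.preconnected (δ v) ℓ
        rcases hcomp p (Or.inl rfl) with h | h
        · exact absurd h (hℓim v)
        · exact h
      exact hu12 (hinj ((hk u₁).trans (hk u₂).symm))
    · exact h3
  -- the other two neighbours x, y of b
  have hℓnb : ℓ ∈ T.neighborSet b := hb.symm
  have hd2 : (T.neighborSet b \ {ℓ}).ncard = 2 := by
    rw [Set.ncard_diff_singleton_of_mem hℓnb]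
    have : ndeg T b = 3 := hb3
    rw [ndeg] at this
    omega
  obtain ⟨x, y, hxy, hset2⟩ := Set.ncard_eq_two.1 hd2
  have hxmem : x ∈ T.neighborSet b \ {ℓ} := by rw [hset2]; exact Set.mem_insert _ _
  have hymem : y ∈ T.neighborSet b \ {ℓ} := by rw [hset2]; exact Set.mem_insert_of_mem _ rfl
  have hbx : T.Adj b x := hxmem.1
  have hby : T.Adj b y := hymem.1
  have hxℓ : x ≠ ℓ := by simpa using hxmem.2
  have hyℓ : y ≠ ℓ := by simpa using hymem.2
  have hxb : x ≠ b := hbx.ne'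
  have hyb : y ≠ b := hby.ne'
  have hnbr : ∀ c, T.Adj b c → c = ℓ ∨ c = x ∨ c = y := by
    intro c hc
    by_cases hcl : c = ℓ
    · exact Or.inl hcl
    · have : c ∈ T.neighborSet b \ {ℓ} := ⟨hc, by simpa using hcl⟩
      rw [hset2] at this
      simpa using Or.inr this
  have hxynadj : ¬ T.Adj x y := by
    intro h
    apply hbridge hbx
    have e1 : (T.deleteEdges {s(b, x)}).Adj b y := by
      rw [deleteEdges_adj]
      refine ⟨hby, ?_⟩
      simp only [Set.mem_singleton_iff, Sym2.eq_iff]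
      rintro (⟨h1, h2⟩ | ⟨h1, h2⟩)
      · exact hxy h2.symm
      · exact hxb h1.symm
    have e2 : (T.deleteEdges {s(b, x)}).Adj y x := by
      rw [deleteEdges_adj]
      refine ⟨h.symm, ?_⟩
      simp only [Set.mem_singleton_iff, Sym2.eq_iff]
      rintro (⟨h1, h2⟩ | ⟨h1, h2⟩)
      · exact hyb h1
      · exact hxb h2
    exact e1.reachable.trans e2.reachable
  -- the pruned tree
  set T₁ : SimpleGraph {t : W // t ≠ ℓ ∧ t ≠ b} :=
    { Adj := fun a c => T.Adj a.1 c.1 ∨ ((a.1 = x ∧ c.1 = y) ∨ (a.1 = y ∧ c.1 = x))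
      symm := by
        constructor
        rintro a c (h | (⟨h1, h2⟩ | ⟨h1, h2⟩))
        exacts [Or.inl h.symm, Or.inr (Or.inr ⟨h2, h1⟩), Or.inr (Or.inl ⟨h2, h1⟩)]
      loopless := by
        constructor
        rintro a (h | (⟨h1, h2⟩ | ⟨h1, h2⟩))
        exacts [T.loopless.irrefl _ h, hxy (h1.symm.trans h2), hxy (h2.symm.trans h1)] } with hT₁def
  have hT₁adj : ∀ a c, T₁.Adj a c ↔
      (T.Adj a.1 c.1 ∨ ((a.1 = x ∧ c.1 = y) ∨ (a.1 = y ∧ c.1 = x))) := fun a c => Iff.rfl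
  have hx' : x ≠ ℓ ∧ x ≠ b := ⟨hxℓ, hxb⟩
  have hy' : y ≠ ℓ ∧ y ≠ b := ⟨hyℓ, hyb⟩
  have h_nadj_ℓ : ∀ t : {t : W // t ≠ ℓ ∧ t ≠ b}, ¬ T.Adj t.1 ℓ :=
    fun t h => t.2.2 (hlb t.1 h.symm)
  have h_adj_b : ∀ t : {t : W // t ≠ ℓ ∧ t ≠ b}, T.Adj t.1 b → t.1 = x ∨ t.1 = y :=
    fun t h => (hnbr t.1 h.symm).resolve_left t.2.1
  -- degree preservation
  have hdeg : ∀ t : {t : W // t ≠ ℓ ∧ t ≠ b}, ndeg T₁ t = ndeg T t.1 := by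
    intro t
    have hbase : ndeg T₁ t = (Subtype.val '' T₁.neighborSet t).ncard :=
      (Set.ncard_image_of_injective _ Subtype.val_injective).symm
    by_cases htx : t.1 = x
    · have himg : Subtype.val '' T₁.neighborSet t = insert y (T.neighborSet x \ {b}) := by
        ext c
        constructor
        · rintro ⟨c', hc', rfl⟩
          rcases (hT₁adj t c').1 hc' with h | (⟨h1, h2⟩ | ⟨h1, h2⟩)
          · refine Set.mem_insert_of_mem _ ⟨?_, by simpa using c'.2.2⟩
            rw [← htx]; exact h
          · exact h2 ▸ Set.mem_insert _ _
          · exact absurd (htx.symm.trans h1) hxy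
        · rintro (h | ⟨hcx, hcb⟩)
          · exact ⟨⟨y, hy'⟩, (hT₁adj t _).2 (Or.inr (Or.inl ⟨htx, rfl⟩)), h.symm⟩
          · have hcℓ : c ≠ ℓ := by
              intro h
              subst h
              exact (fun hh => hxb (hlb x hh.symm)) hcx
            refine ⟨⟨c, hcℓ, by simpa using hcb⟩, (hT₁adj t _).2 (Or.inl ?_), rfl⟩
            rw [htx]; exact hcx
      have hyn : y ∉ T.neighborSet x := fun h => hxynadj h
      rw [hbase, himg, Set.ncard_exchange hyn hbx.symm, ndeg, htx]
    · by_cases hty : t.1 = y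
      · have himg : Subtype.val '' T₁.neighborSet t = insert x (T.neighborSet y \ {b}) := by
          ext c
          constructor
          · rintro ⟨c', hc', rfl⟩
            rcases (hT₁adj t c').1 hc' with h | (⟨h1, h2⟩ | ⟨h1, h2⟩)
            · refine Set.mem_insert_of_mem _ ⟨?_, by simpa using c'.2.2⟩
              rw [← hty]; exact h
            · exact absurd (hty.symm.trans h1) (fun hh => hxy hh.symm)
            · exact h2 ▸ Set.mem_insert _ _
          · rintro (h | ⟨hcx, hcb⟩)
            · exact ⟨⟨x, hx'⟩, (hT₁adj t _).2 (Or.inr (Or.inr ⟨hty, rfl⟩)), h.symm⟩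
            · have hcℓ : c ≠ ℓ := by
                intro h
                subst h
                exact (fun hh => hyb (hlb y hh.symm)) hcx
              refine ⟨⟨c, hcℓ, by simpa using hcb⟩, (hT₁adj t _).2 (Or.inl ?_), rfl⟩
              rw [hty]; exact hcx
        have hxn : x ∉ T.neighborSet y := fun h => hxynadj h.symm
        rw [hbase, himg, Set.ncard_exchange hxn hby.symm, ndeg, hty]
      · have himg : Subtype.val '' T₁.neighborSet t = T.neighborSet t.1 := by
          ext c
          constructor
          · rintro ⟨c', hc', rfl⟩
            rcases (hT₁adj t c').1 hc' with h | (⟨h1, h2⟩ | ⟨h1, h2⟩)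
            · exact h
            · exact absurd h1 htx
            · exact absurd h1 hty
          · intro hc
            have hcℓ : c ≠ ℓ := fun h => h_nadj_ℓ t (h ▸ hc)
            have hcb : c ≠ b := by
              intro h
              rcases h_adj_b t (h ▸ hc) with h1 | h1
              exacts [htx h1, hty h1]
            exact ⟨⟨c, hcℓ, hcb⟩, (hT₁adj t _).2 (Or.inl hc), rfl⟩
        rw [hbase, himg, ndeg]
  -- connectivity
  have hold : ∀ a c : {t : W // t ≠ ℓ ∧ t ≠ b}, T.Adj a.1 c.1 → T₁.Adj a c :=
    fun a c h => Or.inl h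
  have hskip : ∀ a c : {t : W // t ≠ ℓ ∧ t ≠ b}, T.Adj a.1 b → T.Adj b c.1 → a ≠ c →
      T₁.Reachable a c := by
    intro a c ha hc hne
    rcases h_adj_b a ha with h1 | h1 <;> rcases h_adj_b c hc.symm with h2 | h2
    · exact absurd (Subtype.ext (h1.trans h2.symm)) hne
    · exact (SimpleGraph.Adj.reachable ((hT₁adj a c).2 (Or.inr (Or.inl ⟨h1, h2⟩))))
    · exact (SimpleGraph.Adj.reachable ((hT₁adj a c).2 (Or.inr (Or.inr ⟨h1, h2⟩))))
    · exact absurd (Subtype.ext (h1.trans h2.symm)) hne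
  have hconn₁ : T₁.Connected := by
    rw [connected_iff]
    refine ⟨?_, ⟨⟨x, hx'⟩⟩⟩
    intro a c
    obtain ⟨p⟩ := hconn.preconnected a.1 c.1
    exact mapup T₁ hold hskip (fun a' h => hlb a' h) p.length p le_rfl a.2 c.2
  -- step lemmas for reachability transfer
  have step_old : ∀ t₁ t₂ : {t : W // t ≠ ℓ ∧ t ≠ b},
      (¬ (t₁.1 = x ∧ t₂.1 = y ∨ t₁.1 = y ∧ t₂.1 = x)) → ∀ a c : {t : W // t ≠ ℓ ∧ t ≠ b},
      (T₁.deleteEdges {s(t₁, t₂)}).Adj a c →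
      (T.deleteEdges {s(t₁.1, t₂.1)}).Reachable a.1 c.1 := by
    intro t₁ t₂ hnexy a c hac
    rw [deleteEdges_adj] at hac
    obtain ⟨hadj, hmem⟩ := hac
    simp only [Set.mem_singleton_iff] at hmem
    have hb_edge : ∀ w : W, s(w, b) ≠ s(t₁.1, t₂.1) := by
      intro w h
      rw [Sym2.eq_iff] at h
      rcases h with ⟨h1, h2⟩ | ⟨h1, h2⟩
      · exact t₂.2.2 h2.symm
      · exact t₁.2.2 h2.symm
    rcases (hT₁adj a c).1 hadj with h | (⟨h1, h2⟩ | ⟨h1, h2⟩)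
    · refine SimpleGraph.Adj.reachable ?_
      rw [deleteEdges_adj]
      refine ⟨h, ?_⟩
      simp only [Set.mem_singleton_iff]
      exact fun hh => hmem (sym2_subtype_eq.1 hh)
    · have e1 : (T.deleteEdges {s(t₁.1, t₂.1)}).Adj a.1 b := by
        rw [deleteEdges_adj]
        exact ⟨h1 ▸ hbx.symm, by simpa using hb_edge a.1⟩
      have e2 : (T.deleteEdges {s(t₁.1, t₂.1)}).Adj b c.1 := by
        rw [deleteEdges_adj]
        refine ⟨h2 ▸ hby, ?_⟩
        simp only [Set.mem_singleton_iff]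
        rw [Sym2.eq_swap]
        exact hb_edge c.1
      exact e1.reachable.trans e2.reachable
    · have e1 : (T.deleteEdges {s(t₁.1, t₂.1)}).Adj a.1 b := by
        rw [deleteEdges_adj]
        exact ⟨h1 ▸ hby.symm, by simpa using hb_edge a.1⟩
      have e2 : (T.deleteEdges {s(t₁.1, t₂.1)}).Adj b c.1 := by
        rw [deleteEdges_adj]
        refine ⟨h2 ▸ hbx, ?_⟩
        simp only [Set.mem_singleton_iff]
        rw [Sym2.eq_swap]
        exact hb_edge c.1
      exact e1.reachable.trans e2.reachable
  have step_new : ∀ a c : {t : W // t ≠ ℓ ∧ t ≠ b},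
      (T₁.deleteEdges {s((⟨x, hx'⟩ : {t : W // t ≠ ℓ ∧ t ≠ b}), (⟨y, hy'⟩ : {t : W // t ≠ ℓ ∧ t ≠ b}))}).Adj a c →
      (T.deleteEdges {s(x, b)}).Reachable a.1 c.1 := by
    intro a c hac
    rw [deleteEdges_adj] at hac
    obtain ⟨hadj, hmem⟩ := hac
    simp only [Set.mem_singleton_iff] at hmem
    rcases (hT₁adj a c).1 hadj with h | (⟨h1, h2⟩ | ⟨h1, h2⟩)
    · refine SimpleGraph.Adj.reachable ?_
      rw [deleteEdges_adj]
      refine ⟨h, ?_⟩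
      simp only [Set.mem_singleton_iff, Sym2.eq_iff]
      rintro (⟨hh1, hh2⟩ | ⟨hh1, hh2⟩)
      · exact c.2.2 hh2
      · exact a.2.2 hh1
    · exact absurd (by rw [Sym2.eq_iff]; exact Or.inl ⟨Subtype.ext h1, Subtype.ext h2⟩) hmem
    · exact absurd (by rw [Sym2.eq_iff]; exact Or.inr ⟨Subtype.ext h1, Subtype.ext h2⟩) hmem
  -- acyclicity
  have hacyc₁ : T₁.IsAcyclic := by
    rw [isAcyclic_iff_forall_edge_isBridge]
    intro e he
    induction e with
    | _ a c =>
      have hadj : T₁.Adj a c := (T₁.mem_edgeSet).1 he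
      rw [isBridge_iff]
      intro hreach
      rcases (hT₁adj a c).1 hadj with holdE | (⟨h1, h2⟩ | ⟨h1, h2⟩)
      · have hnexy : ¬ (a.1 = x ∧ c.1 = y ∨ a.1 = y ∧ c.1 = x) := by
          rintro (⟨hh1, hh2⟩ | ⟨hh1, hh2⟩)
          · exact hxynadj (hh1 ▸ hh2 ▸ holdE)
          · exact hxynadj (hh1 ▸ hh2 ▸ holdE).symm
        exact hbridge holdE (mapdown Subtype.val (step_old a c hnexy) hreach)
      · have ha' : a = ⟨x, hx'⟩ := Subtype.ext h1
        have hc' : c = ⟨y, hy'⟩ := Subtype.ext h2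
        rw [ha', hc'] at hreach
        have hr2 := mapdown Subtype.val step_new hreach
        have e2 : (T.deleteEdges {s(x, b)}).Adj y b := by
          rw [deleteEdges_adj]
          refine ⟨hby.symm, ?_⟩
          simp only [Set.mem_singleton_iff, Sym2.eq_iff]
          rintro (⟨hh1, hh2⟩ | ⟨hh1, hh2⟩)
          · exact hxy hh1.symm
          · exact hyb hh1
        exact hbridge hbx.symm (hr2.trans e2.reachable)
      · have ha' : a = ⟨y, hy'⟩ := Subtype.ext h1
        have hc' : c = ⟨x, hx'⟩ := Subtype.ext h2
        rw [ha', hc'] at hreach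
        have hsw : ({s((⟨y, hy'⟩ : {t : W // t ≠ ℓ ∧ t ≠ b}), (⟨x, hx'⟩ : {t : W // t ≠ ℓ ∧ t ≠ b}))} : Set (Sym2 {t : W // t ≠ ℓ ∧ t ≠ b})) = {s((⟨x, hx'⟩ : {t : W // t ≠ ℓ ∧ t ≠ b}), (⟨y, hy'⟩ : {t : W // t ≠ ℓ ∧ t ≠ b}))} := by
          rw [Sym2.eq_swap]
        rw [hsw] at hreach
        have hr2 := mapdown Subtype.val step_new hreach.symm
        have e2 : (T.deleteEdges {s(x, b)}).Adj y b := by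
          rw [deleteEdges_adj]
          refine ⟨hby.symm, ?_⟩
          simp only [Set.mem_singleton_iff, Sym2.eq_iff]
          rintro (⟨hh1, hh2⟩ | ⟨hh1, hh2⟩)
          · exact hxy hh1.symm
          · exact hyb hh1
        exact hbridge hbx.symm (hr2.trans e2.reachable)
  -- the new leaf assignment
  have hδb : ∀ v, δ v ≠ b := by
    intro v h
    have h2 := hleaf v
    rw [h, hb3] at h2
    omega
  set δ₁ : U → {t : W // t ≠ ℓ ∧ t ≠ b} := fun v => ⟨δ v, hℓim v, hδb v⟩ with hδ₁def
  -- shore transfer for surviving edges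
  have shore_old : ∀ t₁ t₂ : {t : W // t ≠ ℓ ∧ t ≠ b},
      (¬ (t₁.1 = x ∧ t₂.1 = y ∨ t₁.1 = y ∧ t₂.1 = x)) →
      treeShore T₁ δ₁ t₁ t₂ = treeShore T δ t₁.1 t₂.1 := by
    intro t₁ t₂ hnexy
    have hold' : ∀ a c : {t : W // t ≠ ℓ ∧ t ≠ b},
        (T.deleteEdges {s(t₁.1, t₂.1)}).Adj a.1 c.1 → (T₁.deleteEdges {s(t₁, t₂)}).Adj a c := by
      intro a c h
      rw [deleteEdges_adj] at h ⊢
      refine ⟨(hT₁adj a c).2 (Or.inl h.1), ?_⟩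
      simp only [Set.mem_singleton_iff] at h ⊢
      exact fun hh => h.2 (sym2_subtype_eq.2 hh)
    have hskip' : ∀ a c : {t : W // t ≠ ℓ ∧ t ≠ b},
        (T.deleteEdges {s(t₁.1, t₂.1)}).Adj a.1 b → (T.deleteEdges {s(t₁.1, t₂.1)}).Adj b c.1 →
        a ≠ c → (T₁.deleteEdges {s(t₁, t₂)}).Reachable a c := by
      intro a c ha hc hne
      rw [deleteEdges_adj] at ha hc
      have hedge : ∀ (pat : a.1 = x ∧ c.1 = y ∨ a.1 = y ∧ c.1 = x),
          (T₁.deleteEdges {s(t₁, t₂)}).Adj a c := by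
        intro pat
        rw [deleteEdges_adj]
        refine ⟨(hT₁adj a c).2 (Or.inr pat), ?_⟩
        simp only [Set.mem_singleton_iff, Sym2.eq_iff]
        rintro (⟨hh1, hh2⟩ | ⟨hh1, hh2⟩)
        · apply hnexy
          rw [← hh1, ← hh2]
          exact pat
        · apply hnexy
          rcases pat with ⟨p1, p2⟩ | ⟨p1, p2⟩
          · exact Or.inr ⟨hh2 ▸ p2, hh1 ▸ p1⟩
          · exact Or.inl ⟨hh2 ▸ p2, hh1 ▸ p1⟩
      rcases h_adj_b a ha.1 with h1 | h1 <;> rcases h_adj_b c hc.1.symm with h2 | h2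
      · exact absurd (Subtype.ext (h1.trans h2.symm)) hne
      · exact (hedge (Or.inl ⟨h1, h2⟩)).reachable
      · exact (hedge (Or.inr ⟨h1, h2⟩)).reachable
      · exact absurd (Subtype.ext (h1.trans h2.symm)) hne
    have hl' : ∀ a : W, (T.deleteEdges {s(t₁.1, t₂.1)}).Adj ℓ a → a = b := by
      intro a h
      rw [deleteEdges_adj] at h
      exact hlb a h.1
    ext v
    simp only [treeShore, Set.mem_setOf_eq]
    constructor
    · intro h
      exact mapdown Subtype.val (step_old t₁ t₂ hnexy) h
    · intro h
      obtain ⟨p⟩ := h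
      exact mapup (T₁.deleteEdges {s(t₁, t₂)}) hold' hskip' hl' p.length p le_rfl
        ⟨hℓim v, hδb v⟩ t₁.2
  -- shore transfer for the new edge
  have hold'' : ∀ a c : {t : W // t ≠ ℓ ∧ t ≠ b},
      (T.deleteEdges {s(x, b)}).Adj a.1 c.1 →
      (T₁.deleteEdges {s((⟨x, hx'⟩ : {t : W // t ≠ ℓ ∧ t ≠ b}), (⟨y, hy'⟩ : {t : W // t ≠ ℓ ∧ t ≠ b}))}).Adj a c := by
    intro a c h
    rw [deleteEdges_adj] at h ⊢
    refine ⟨(hT₁adj a c).2 (Or.inl h.1), ?_⟩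
    simp only [Set.mem_singleton_iff, Sym2.eq_iff]
    rintro (⟨hh1, hh2⟩ | ⟨hh1, hh2⟩)
    · apply hxynadj
      have e1 : a.1 = x := congrArg Subtype.val hh1
      have e2 : c.1 = y := congrArg Subtype.val hh2
      rw [← e1, ← e2]
      exact h.1
    · apply hxynadj
      have e1 : a.1 = y := congrArg Subtype.val hh1
      have e2 : c.1 = x := congrArg Subtype.val hh2
      rw [← e2, ← e1]
      exact h.1.symm
  have hskip'' : ∀ a c : {t : W // t ≠ ℓ ∧ t ≠ b},
      (T.deleteEdges {s(x, b)}).Adj a.1 b → (T.deleteEdges {s(x, b)}).Adj b c.1 →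
      a ≠ c → (T₁.deleteEdges {s((⟨x, hx'⟩ : {t : W // t ≠ ℓ ∧ t ≠ b}), (⟨y, hy'⟩ : {t : W // t ≠ ℓ ∧ t ≠ b}))}).Reachable a c := by
    intro a c ha hc hne
    rw [deleteEdges_adj] at ha hc
    have hax : a.1 ≠ x := by
      intro hh
      apply ha.2
      simp only [Set.mem_singleton_iff]
      rw [hh]
    have hcx : c.1 ≠ x := by
      intro hh
      apply hc.2
      simp only [Set.mem_singleton_iff]
      rw [hh, Sym2.eq_swap]
    have h1 := (h_adj_b a ha.1).resolve_left hax
    have h2 := (h_adj_b c hc.1.symm).resolve_left hcx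
    exact absurd (Subtype.ext (h1.trans h2.symm)) hne
  have hl'' : ∀ a : W, (T.deleteEdges {s(x, b)}).Adj ℓ a → a = b := by
    intro a h
    rw [deleteEdges_adj] at h
    exact hlb a h.1
  have e2xb : (T.deleteEdges {s(x, b)}).Adj y b := by
    rw [deleteEdges_adj]
    refine ⟨hby.symm, ?_⟩
    simp only [Set.mem_singleton_iff, Sym2.eq_iff]
    rintro (⟨hh1, hh2⟩ | ⟨hh1, hh2⟩)
    · exact hxy hh1.symm
    · exact hyb hh1
  have shore_new₁ : treeShore T₁ δ₁ ⟨x, hx'⟩ ⟨y, hy'⟩ = treeShore T δ x b := by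
    ext v
    simp only [treeShore, Set.mem_setOf_eq]
    constructor
    · intro h
      exact mapdown Subtype.val step_new h
    · intro h
      obtain ⟨p⟩ := h
      exact mapup (T₁.deleteEdges {s((⟨x, hx'⟩ : {t : W // t ≠ ℓ ∧ t ≠ b}), (⟨y, hy'⟩ : {t : W // t ≠ ℓ ∧ t ≠ b}))}) hold'' hskip''
        hl'' p.length p le_rfl ⟨hℓim v, hδb v⟩ hx'
  have shore_new₂ : treeShore T₁ δ₁ ⟨y, hy'⟩ ⟨x, hx'⟩ = treeShore T δ b x := by
    ext v
    simp only [treeShore, Set.mem_setOf_eq]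
    have hsw1 : ({s((⟨y, hy'⟩ : {t : W // t ≠ ℓ ∧ t ≠ b}), (⟨x, hx'⟩ : {t : W // t ≠ ℓ ∧ t ≠ b}))} : Set (Sym2 {t : W // t ≠ ℓ ∧ t ≠ b})) =
        {s((⟨x, hx'⟩ : {t : W // t ≠ ℓ ∧ t ≠ b}), (⟨y, hy'⟩ : {t : W // t ≠ ℓ ∧ t ≠ b}))} := by rw [Sym2.eq_swap]
    have hsw2 : ({s(b, x)} : Set (Sym2 W)) = {s(x, b)} := by rw [Sym2.eq_swap]
    rw [hsw1, hsw2]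
    constructor
    · intro h
      exact (mapdown Subtype.val step_new h).trans e2xb.reachable
    · intro h
      obtain ⟨p⟩ := h.trans e2xb.symm.reachable
      exact mapup (T₁.deleteEdges {s((⟨x, hx'⟩ : {t : W // t ≠ ℓ ∧ t ≠ b}), (⟨y, hy'⟩ : {t : W // t ≠ ℓ ∧ t ≠ b}))}) hold'' hskip''
        hl'' p.length p le_rfl ⟨hℓim v, hδb v⟩ hy'
  -- the cut correspondence
  have hcorr : CutCorr T δ T₁ δ₁ := by
    intro t₁ t₂ hadj
    rcases (hT₁adj t₁ t₂).1 hadj with holdE | (⟨h1, h2⟩ | ⟨h1, h2⟩)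
    · have hnexy : ¬ (t₁.1 = x ∧ t₂.1 = y ∨ t₁.1 = y ∧ t₂.1 = x) := by
        rintro (⟨hh1, hh2⟩ | ⟨hh1, hh2⟩)
        · exact hxynadj (hh1 ▸ hh2 ▸ holdE)
        · exact hxynadj (hh1 ▸ hh2 ▸ holdE).symm
      have hneyx : ¬ (t₂.1 = x ∧ t₁.1 = y ∨ t₂.1 = y ∧ t₁.1 = x) := by tauto
      exact ⟨t₁.1, t₂.1, holdE, shore_old t₁ t₂ hnexy, shore_old t₂ t₁ hneyx,
        fun n1 n2 => ⟨by rw [← hdeg t₁]; exact n1, by rw [← hdeg t₂]; exact n2⟩⟩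
    · have ht₁ : t₁ = ⟨x, hx'⟩ := Subtype.ext h1
      have ht₂ : t₂ = ⟨y, hy'⟩ := Subtype.ext h2
      refine ⟨x, b, hbx.symm, ?_, ?_, ?_⟩
      · rw [ht₁, ht₂]; exact shore_new₁
      · rw [ht₁, ht₂]; exact shore_new₂
      · intro n1 _
        refine ⟨?_, by rw [ndeg] at hb3 ⊢; omega⟩
        rw [ht₁] at n1
        rw [← hdeg ⟨x, hx'⟩]
        exact n1
    · have ht₁ : t₁ = ⟨y, hy'⟩ := Subtype.ext h1
      have ht₂ : t₂ = ⟨x, hx'⟩ := Subtype.ext h2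
      refine ⟨b, x, hbx, ?_, ?_, ?_⟩
      · rw [ht₁, ht₂]; exact shore_new₂
      · rw [ht₁, ht₂]; exact shore_new₁
      · intro _ n2
        refine ⟨by rw [ndeg] at hb3 ⊢; omega, ?_⟩
        rw [ht₂] at n2
        rw [← hdeg ⟨x, hx'⟩]
        exact n2
  exact ⟨b, T₁, δ₁, hbℓ, ⟨(isTree_iff T₁).2 ⟨hconn₁, hacyc₁⟩,
    fun t => by rw [hdeg t]; exact hT.2 t.1⟩,
    fun v w h => hinj (congrArg Subtype.val h),
    fun v => (hdeg (δ₁ v)).trans (hleaf v), hcorr⟩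



end PruneStep
section PruneRec

lemma card_subtype_pair {W : Type*} [Finite W] {ℓ b : W} (h : ℓ ≠ b) :
    Nat.card {t : W // t ≠ ℓ ∧ t ≠ b} + 2 = Nat.card W := by
  have h1 : Nat.card {t : W // t ≠ ℓ ∧ t ≠ b} = (({ℓ, b} : Set W)ᶜ).ncard := by
    rw [← Nat.card_coe_set_eq]
    refine Nat.card_congr (Equiv.subtypeEquivRight ?_)
    intro t
    simp only [Set.mem_compl_iff, Set.mem_insert_iff, Set.mem_singleton_iff]
    tauto
  have h2 : ({ℓ, b} : Set W).ncard = 2 := Set.ncard_pair h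
  have h3 := Set.ncard_add_ncard_compl ({ℓ, b} : Set W)
  omega

lemma prune {U : Type*} : ∀ (k : ℕ) (W : Type) [Finite W] (T : SimpleGraph W) (δ : U → W),
    Nat.card W ≤ k → IsCubicTree T → Function.Injective δ → (∀ v, ndeg T (δ v) = 1) →
    (∃ u₁ u₂ : U, u₁ ≠ u₂) →
    ∃ (W₂ : Type) (_ : Finite W₂) (T₂ : SimpleGraph W₂) (δ₂ : U → W₂),
      IsCubicTree T₂ ∧ Function.Injective δ₂ ∧ (∀ v, ndeg T₂ (δ₂ v) = 1) ∧
      (∀ t, ndeg T₂ t = 1 → ∃ v, δ₂ v = t) ∧ CutCorr T δ T₂ δ₂ := by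
  intro k
  induction k with
  | zero =>
    intro W _ T δ hcard _ _ _ hU
    obtain ⟨u₁, -, -⟩ := hU
    have : Nonempty W := ⟨δ u₁⟩
    have := Nat.card_pos (α := W)
    omega
  | succ k ih =>
    intro W _ T δ hcard hcub hinj hleaf hU
    by_cases hall : ∀ t, ndeg T t = 1 → ∃ v, δ v = t
    · exact ⟨W, inferInstance, T, δ, hcub, hinj, hleaf, hall, CutCorr.refl T δ⟩
    · push_neg at hall
      obtain ⟨ℓ, hℓ1, hℓim⟩ := hall
      obtain ⟨b, T₁, δ₁, hbℓ, hcub₁, hinj₁, hleaf₁, hcorr₁⟩ :=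
        prune_step T δ hcub hinj hleaf hU hℓ1 hℓim
      have hcard₁ : Nat.card {t : W // t ≠ ℓ ∧ t ≠ b} ≤ k := by
        have := card_subtype_pair hbℓ
        omega
      obtain ⟨W₂, i₂, T₂, δ₂, hc₂, hi₂, hl₂, hs₂, hcorr₂⟩ :=
        ih {t : W // t ≠ ℓ ∧ t ≠ b} T₁ δ₁ hcard₁ hcub₁ hinj₁ hleaf₁ hU
      exact ⟨W₂, i₂, T₂, δ₂, hc₂, hi₂, hl₂, hs₂, hcorr₁.comp hcorr₂⟩

lemma transport {U : Type*} {W : Type} [Finite W] (T : SimpleGraph W) (δ : U → W)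
    (hcub : IsCubicTree T) (hinj : Function.Injective δ) (hleaf : ∀ v, ndeg T (δ v) = 1)
    (hsurj : ∀ t, ndeg T t = 1 → ∃ v, δ v = t) :
    ∃ (m : ℕ) (T' : SimpleGraph (Fin m)) (δ' : U → Fin m),
      IsCubicTree T' ∧ Function.Injective δ' ∧ (∀ v, ndeg T' (δ' v) = 1) ∧
      (∀ t, ndeg T' t = 1 → ∃ v, δ' v = t) ∧ CutCorr T δ T' δ' := by
  have : Fintype W := Fintype.ofFinite W
  set m := Fintype.card W
  set e : W ≃ Fin m := Fintype.equivFin W with hedef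
  set T' : SimpleGraph (Fin m) := SimpleGraph.comap (⇑e.symm) T with hT'def
  set δ' : U → Fin m := fun v => e (δ v) with hδ'def
  have hadj : ∀ a c : Fin m, T'.Adj a c ↔ T.Adj (e.symm a) (e.symm c) := fun a c => Iff.rfl
  have hdeg : ∀ t : Fin m, ndeg T' t = ndeg T (e.symm t) := by
    intro t
    have himg : ⇑e '' T.neighborSet (e.symm t) = T'.neighborSet t := by
      ext c
      constructor
      · rintro ⟨c', hc', rfl⟩
        show T.Adj (e.symm t) (e.symm (e c'))
        rwa [Equiv.symm_apply_apply]
      · intro hc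
        exact ⟨e.symm c, hc, e.apply_symm_apply c⟩
    rw [ndeg, ndeg, ← himg, Set.ncard_image_of_injective _ e.injective]
  -- reachability transfer
  have fwd : ∀ (s : Set (Sym2 W)) (s' : Set (Sym2 (Fin m))),
      (∀ p q : W, s(p, q) ∉ s → s(e p, e q) ∉ s') →
      ∀ {a c : W}, (T.deleteEdges s).Reachable a c →
        (T'.deleteEdges s').Reachable (e a) (e c) := by
    intro s s' hs a c h
    refine mapdown (⇑e) ?_ h
    intro p q hpq
    rw [deleteEdges_adj] at hpq
    refine SimpleGraph.Adj.reachable ?_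
    rw [deleteEdges_adj]
    constructor
    · show T.Adj (e.symm (e p)) (e.symm (e q))
      rw [Equiv.symm_apply_apply, Equiv.symm_apply_apply]
      exact hpq.1
    · exact hs p q hpq.2
  have bwd : ∀ (s : Set (Sym2 W)) (s' : Set (Sym2 (Fin m))),
      (∀ p q : Fin m, s(p, q) ∉ s' → s(e.symm p, e.symm q) ∉ s) →
      ∀ {a c : Fin m}, (T'.deleteEdges s').Reachable a c →
        (T.deleteEdges s).Reachable (e.symm a) (e.symm c) := by
    intro s s' hs a c h
    refine mapdown (⇑e.symm) ?_ h
    intro p q hpq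
    rw [deleteEdges_adj] at hpq
    refine SimpleGraph.Adj.reachable ?_
    rw [deleteEdges_adj]
    exact ⟨hpq.1, hs p q hpq.2⟩
  have hshore : ∀ t₁ t₂ : Fin m, treeShore T' δ' t₁ t₂ = treeShore T δ (e.symm t₁) (e.symm t₂) := by
    intro t₁ t₂
    ext v
    simp only [treeShore, Set.mem_setOf_eq]
    constructor
    · intro h
      have h2 := bwd {s(e.symm t₁, e.symm t₂)} {s(t₁, t₂)} ?_ h
      · rwa [Equiv.symm_apply_apply] at h2
      · intro p q hpq hmem
        apply hpq
        simp only [Set.mem_singleton_iff, Sym2.eq_iff] at hmem ⊢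
        rcases hmem with ⟨h1, h2⟩ | ⟨h1, h2⟩
        · exact Or.inl ⟨e.symm.injective h1, e.symm.injective h2⟩
        · exact Or.inr ⟨e.symm.injective h1, e.symm.injective h2⟩
    · intro h
      have h2 := fwd {s(e.symm t₁, e.symm t₂)} {s(t₁, t₂)} ?_ h
      · rwa [show e (e.symm t₁) = t₁ from e.apply_symm_apply t₁] at h2
      · intro p q hpq hmem
        apply hpq
        simp only [Set.mem_singleton_iff, Sym2.eq_iff] at hmem ⊢
        rcases hmem with ⟨h1, h2⟩ | ⟨h1, h2⟩
        · exact Or.inl ⟨by rw [← h1, Equiv.symm_apply_apply], by rw [← h2, Equiv.symm_apply_apply]⟩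
        · exact Or.inr ⟨by rw [← h1, Equiv.symm_apply_apply], by rw [← h2, Equiv.symm_apply_apply]⟩
  have hTT := (isTree_iff T).1 hcub.1
  have hconn' : T'.Connected := by
    rw [connected_iff]
    constructor
    · intro a c
      have h0 : (T.deleteEdges ∅).Reachable (e.symm a) (e.symm c) := by
        rw [SimpleGraph.deleteEdges_empty]
        exact hTT.1.preconnected _ _
      have h := fwd ∅ ∅ (fun _ _ h => h) h0
      rw [e.apply_symm_apply, e.apply_symm_apply, SimpleGraph.deleteEdges_empty] at h
      exact h
    · have : Nonempty W := ((connected_iff T).1 hTT.1).2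
      exact ⟨e (Classical.arbitrary W)⟩
  have hbridgeT : ∀ {p q : W}, T.Adj p q → ¬ (T.deleteEdges {s(p, q)}).Reachable p q := by
    intro p q h
    have h2 := (isAcyclic_iff_forall_edge_isBridge.1 hTT.2) ((T.mem_edgeSet).2 h)
    rw [isBridge_iff] at h2
    exact h2
  have hacyc' : T'.IsAcyclic := by
    rw [isAcyclic_iff_forall_edge_isBridge]
    intro f hf
    induction f with
    | _ a c =>
      have hadj' : T'.Adj a c := (T'.mem_edgeSet).1 hf
      rw [isBridge_iff]
      intro hreach
      have h2 := bwd {s(e.symm a, e.symm c)} {s(a, c)} ?_ hreach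
      · exact hbridgeT ((hadj a c).1 hadj') h2
      · intro p q hpq hmem
        apply hpq
        simp only [Set.mem_singleton_iff, Sym2.eq_iff] at hmem ⊢
        rcases hmem with ⟨h1, h2⟩ | ⟨h1, h2⟩
        · exact Or.inl ⟨e.symm.injective h1, e.symm.injective h2⟩
        · exact Or.inr ⟨e.symm.injective h1, e.symm.injective h2⟩
  refine ⟨m, T', δ', ⟨(isTree_iff T').2 ⟨hconn', hacyc'⟩, fun t => by rw [hdeg t]; exact hcub.2 _⟩,
    fun v w h => hinj (by have := congrArg (⇑e.symm) h; rwa [Equiv.symm_apply_apply, Equiv.symm_apply_apply] at this),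
    fun v => by rw [hdeg, Equiv.symm_apply_apply]; exact hleaf v,
    ?_, ?_⟩
  · intro t ht
    rw [hdeg t] at ht
    obtain ⟨v, hv⟩ := hsurj (e.symm t) ht
    exact ⟨v, by rw [hδ'def]; simp only [hv, e.apply_symm_apply]⟩
  · intro t₁ t₂ hadj'
    refine ⟨e.symm t₁, e.symm t₂, (hadj t₁ t₂).1 hadj', hshore t₁ t₂, hshore t₂ t₁, ?_⟩
    intro n1 n2
    rw [hdeg] at n1 n2
    exact ⟨n1, n2⟩

end PruneRec
section FinalHelpers

lemma shore_leaf {U W : Type*} {T : SimpleGraph W} {δ : U → W} (hinj : Function.Injective δ)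
    {t₁ t₂ : W} (hadj : T.Adj t₁ t₂) (h1 : ndeg T t₁ = 1) {v' : U} (hv' : δ v' = t₁) :
    treeShore T δ t₁ t₂ = {v'} := by
  have hiso : ∀ c, ¬ (T.deleteEdges {s(t₁, t₂)}).Adj t₁ c := by
    intro c hc
    rw [deleteEdges_adj] at hc
    have hct : c = t₂ := ndeg_one_unique h1 hadj hc.1
    exact hc.2 (by rw [hct]; rfl)
  ext v
  simp only [treeShore, Set.mem_setOf_eq, Set.mem_singleton_iff]
  constructor
  · intro h
    exact hinj ((reach_of_isolated hiso h).trans hv'.symm)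
  · rintro rfl
    rw [hv']
lemma shore_coleaf {U W : Type*} {T : SimpleGraph W} {δ : U → W} (hconn : T.Connected)
    (hinj : Function.Injective δ) {t₁ t₂ : W} (hadj : T.Adj t₁ t₂) (h2 : ndeg T t₂ = 1)
    {v' : U} (hv' : δ v' = t₂) :
    treeShore T δ t₁ t₂ = {v'}ᶜ := by
  have hiso : ∀ c, ¬ (T.deleteEdges {s(t₁, t₂)}).Adj t₂ c := by
    intro c hc
    rw [deleteEdges_adj] at hc
    have hct : c = t₁ := ndeg_one_unique h2 hadj.symm hc.1
    apply hc.2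
    rw [hct]
    exact Set.mem_singleton_iff.2 Sym2.eq_swap
  ext v
  simp only [treeShore, Set.mem_setOf_eq, Set.mem_compl_iff, Set.mem_singleton_iff]
  constructor
  · intro h hveq
    rw [hveq, hv'] at h
    exact hadj.ne (reach_of_isolated hiso h.symm)
  · intro hne
    obtain ⟨p⟩ := hconn.preconnected (δ v) t₁
    rcases reach_side (t₂ := t₂) p with h | h
    · exact h
    · exact absurd (hinj ((reach_of_isolated hiso h).trans hv'.symm)) hne

lemma mp_compl {V' : Type*} (H : SimpleGraph V') (S : Set V') :
    matchingPorosity H Sᶜ = matchingPorosity H S := by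
  unfold matchingPorosity
  rw [cutEdges_compl]

lemma mp_singleton_le_one {V' : Type*} [Finite V'] (H : SimpleGraph V') (v' : V') :
    matchingPorosity H {v'} ≤ 1 := by
  refine csSup_le' ?_
  rintro n ⟨N, hN, rfl⟩
  rw [cr_eq_bdry hN.1]
  have hsub : bdry N {v'} ⊆ {v'} := fun x hx => hx.1
  calc (bdry N {v'}).ncard ≤ ({v'} : Set V').ncard := Set.ncard_le_ncard hsub (Set.toFinite _)
    _ = 1 := Set.ncard_singleton _

lemma one_le_mp_singleton {V' : Type*} [Finite V'] {H : SimpleGraph V'} {P : H.Subgraph}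
    (hP : P.IsPerfectMatching) (v' : V') : 1 ≤ matchingPorosity H {v'} := by
  refine le_csSup (mp_bddAbove _) ⟨P, hP, ?_⟩
  rw [cr_eq_bdry hP.1]
  have hb : bdry P {v'} = {v'} := by
    ext x
    simp only [bdry, Set.mem_setOf_eq, Set.mem_singleton_iff]
    constructor
    · rintro ⟨h, -⟩; exact h
    · rintro rfl
      refine ⟨rfl, ?_⟩
      obtain ⟨c, hc, -⟩ := hP.1 (hP.2 x)
      exact ⟨c, hc, fun h => H.loopless.irrefl x (h ▸ hc.adj_sub)⟩
  rw [hb, Set.ncard_singleton]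

end FinalHelpers
/-- If `(T, δ)` is an `M`-PM-decomposition of `G` of width `k` and `∂(Z)` is a
non-trivial tight cut, then the tight cut contraction `G_Z` has an
`M|_{G_Z}`-PM-decomposition of width at most `k`. -/
theorem contraction_MPMdecomp_width_le {V : Type*} [Finite V] (G : SimpleGraph V)
    (hG : MatchingCovered G) (Z : Set V) (hZ : IsNontrivialTightCut G Z)
    (M : G.Subgraph) (hM : M.IsPerfectMatching)
    {n : ℕ} (T : SimpleGraph (Fin n)) (δ : V → Fin n)
    (hT : IsMPMDecomp G M T δ) (k : ℕ) (hw : decompWidth G T δ = k) :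
    ∃ (m : ℕ) (T' : SimpleGraph (Fin m)) (δ' : Option {v : V // v ∉ Z} → Fin m),
      IsMPMDecomp (contractShore G Z) (restrictMatching G Z M) T' δ' ∧
      decompWidth (contractShore G Z) T' δ' ≤ k := by
  classical
  subst hw
  obtain ⟨hZt, hZ2, hZc2⟩ := hZ
  obtain ⟨u₀, z₀, hu₀, hz₀, hM₀A⟩ := exists_crossing hZt hM
  obtain ⟨hPMD, hConf⟩ := hT
  obtain ⟨hTcub, hTinj, hTleaf, hTsurj⟩ := hPMD
  -- the leaf assignment for the contraction
  set δ' : Option {v : V // v ∉ Z} → Fin n := fun o => δ (liftV Z z₀ o) with hδ'def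
  have hδ'inj : Function.Injective δ' := by
    intro a c h
    match a, c with
    | some p, some q => exact congrArg some (Subtype.ext (hTinj h))
    | some p, none =>
      exact absurd (show p.1 ∈ Z by have h2 := hTinj h; rw [show liftV Z z₀ (some p) = p.1 from rfl,
        show liftV Z z₀ none = z₀ from rfl] at h2; rw [h2]; exact hz₀) p.2
    | none, some q =>
      exact absurd (show q.1 ∈ Z by have h2 := hTinj h; rw [show liftV Z z₀ (some q) = q.1 from rfl,
        show liftV Z z₀ none = z₀ from rfl] at h2; rw [← h2]; exact hz₀) q.2
    | none, none => rfl
  have hδ'leaf : ∀ o, ndeg T (δ' o) = 1 := fun o => hTleaf _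
  have hU2 : ∃ u₁ u₂ : Option {v : V // v ∉ Z}, u₁ ≠ u₂ := by
    obtain ⟨a, c, ha, hc, hac⟩ := (Set.one_lt_ncard_iff (Set.toFinite Zᶜ)).1 (by omega)
    exact ⟨some ⟨a, ha⟩, some ⟨c, hc⟩, fun h => hac (congrArg (liftV Z z₀) h)⟩
  obtain ⟨W₂, iW₂, T₂, δ₂, hcub₂, hinj₂, hleaf₂, hsurj₂, hcorr₂⟩ :=
    prune (Nat.card (Fin n)) (Fin n) T δ' le_rfl hTcub hδ'inj hδ'leaf hU2
  obtain ⟨m, T', δ'', hcub', hinj', hleaf', hsurj', hcorr'⟩ :=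
    transport T₂ δ₂ hcub₂ hinj₂ hleaf₂ hsurj₂
  have hcorr : CutCorr T δ' T' δ'' := hcorr₂.comp hcorr'
  have key : ∀ s₁ s₂ : Fin n,
      treeShore T δ' s₁ s₂ = liftV Z z₀ ⁻¹' treeShore T δ s₁ s₂ := fun _ _ => rfl
  have widthBdd : BddAbove {q | ∃ t₁ t₂, T.Adj t₁ t₂ ∧
      q = matchingPorosity G (treeShore T δ t₁ t₂)} :=
    ⟨Nat.card (Sym2 V), by rintro q ⟨a, c, hac, rfl⟩; exact mp_le_bound G _⟩
  refine ⟨m, T', δ'', ⟨⟨hcub', hinj', hleaf', hsurj'⟩, ?_⟩, ?_⟩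
  · -- conformality
    intro t₁ t₂ hadj hn1 hn2
    obtain ⟨s₁, s₂, hsadj, hsh1, hsh2, hinner⟩ := hcorr t₁ t₂ hadj
    obtain ⟨hn1', hn2'⟩ := hinner hn1 hn2
    have hconfG := hConf s₁ s₂ hsadj hn1' hn2'
    constructor
    · rw [hsh1, key]
      exact conformal_restrict hZt hM hu₀ hz₀ hM₀A hconfG.1
    · rw [hsh2, key]
      exact conformal_restrict hZt hM hu₀ hz₀ hM₀A hconfG.2
  · -- width bound
    have hk1 : 1 ≤ decompWidth G T δ := by
      have h10 : ndeg T (δ z₀) = 1 := hTleaf z₀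
      obtain ⟨a, ha⟩ := Set.ncard_eq_one.1 h10
      have hadj0 : T.Adj (δ z₀) a := by
        have : a ∈ T.neighborSet (δ z₀) := by rw [ha]; rfl
        exact this
      have hsh : treeShore T δ (δ z₀) a = {z₀} := shore_leaf hTinj hadj0 h10 rfl
      have h1 : (1 : ℕ) ≤ matchingPorosity G (treeShore T δ (δ z₀) a) := by
        rw [hsh]
        exact one_le_mp_singleton hM z₀
      exact h1.trans (le_csSup widthBdd ⟨δ z₀, a, hadj0, rfl⟩)
    refine csSup_le' ?_
    rintro q ⟨t₁, t₂, hadj', rfl⟩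
    by_cases h1 : ndeg T' t₁ = 1
    · obtain ⟨v', hv'⟩ := hsurj' t₁ h1
      rw [shore_leaf hinj' hadj' h1 hv']
      exact (mp_singleton_le_one _ v').trans hk1
    · by_cases h2 : ndeg T' t₂ = 1
      · obtain ⟨v', hv'⟩ := hsurj' t₂ h2
        have hconn' : T'.Connected := ((isTree_iff T').1 hcub'.1).1
        rw [shore_coleaf hconn' hinj' hadj' h2 hv', mp_compl]
        exact (mp_singleton_le_one _ v').trans hk1
      · obtain ⟨s₁, s₂, hsadj, hsh1, -, hinner⟩ := hcorr t₁ t₂ hadj'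
        obtain ⟨hn1', hn2'⟩ := hinner h1 h2
        have hconfG := (hConf s₁ s₂ hsadj hn1' hn2').1
        rw [hsh1, key s₁ s₂]
        refine le_trans (csSup_le' ?_) (le_csSup widthBdd ⟨s₁, s₂, hsadj, rfl⟩)
        rintro q' ⟨N, hN, rfl⟩
        exact cr_le_porosity hG hZt hM hu₀ hz₀ hM₀A hconfG hN
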